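/- Under the hypotheses of the previous matrix construction, if the $\lambda_j$ are pairwise distinct and $a_j + \lambda_j b_j \neq 0$ for all $j = 1, \ldots, n$, then the pair $(A_1, B_1)$ satisfies the Kalman rank condition: $\mathrm{rank}(B_1, A_1 B_1, \ldots, A_1^n B_1) = n+1$. -/

import Mathlib

/-- The matrix `A₁` with first row zero, first column `(0, a₁, …, aₙ)ᵀ`,
diagonal `0, λ₁, …, λₙ`, and all other entries zero. -/
def A1mat {n : ℕ} (lam a : Fin n → ℝ) : Matrix (Fin (n + 1)) (Fin (n + 1)) ℝ :=
  Matrix.of fun i j =>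
    Fin.cases 0
      (fun i' => Fin.cases (a i') (fun j' => if j' = i' then lam i' else 0) j) i

/-- The vector `B₁ = (1, b₁, …, bₙ)ᵀ`. -/
def B1vec {n : ℕ} (b : Fin n → ℝ) : Fin (n + 1) → ℝ :=
  fun i => Fin.cases 1 b i

/-- Kalman controllability matrix: columns are `A^k ⬝ v` for `k = 0, …, n`. -/
def kalmanMatrix {n : ℕ} (A : Matrix (Fin (n + 1)) (Fin (n + 1)) ℝ)
    (v : Fin (n + 1) → ℝ) : Matrix (Fin (n + 1)) (Fin (n + 1)) ℝ :=
  Matrix.of fun i k => ((A ^ (k : ℕ)).mulVec v) i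

lemma A1_mulVec {n : ℕ} (lam a : Fin n → ℝ) (v : Fin (n+1) → ℝ) :
    (A1mat lam a).mulVec v = fun i =>
      Fin.cases 0 (fun j => a j * v 0 + lam j * v j.succ) i := by
  funext i
  induction i using Fin.cases with
  | zero => simp [Matrix.mulVec, dotProduct, A1mat]
  | succ j =>
      simp [Matrix.mulVec, dotProduct, A1mat, Fin.sum_univ_succ, ite_mul,
        Finset.sum_ite_eq']

lemma A1_pow_mulVec {n : ℕ} (lam a b : Fin n → ℝ) (k : ℕ) :
    ((A1mat lam a)^(k+1)).mulVec (B1vec b) = fun i =>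
      Fin.cases 0 (fun j => lam j ^ k * (a j + lam j * b j)) i := by
  induction k with
  | zero =>
      rw [pow_one, A1_mulVec]
      funext i
      induction i using Fin.cases <;> simp [B1vec, mul_one]
  | succ k ih =>
      rw [pow_succ', ← Matrix.mulVec_mulVec, ih, A1_mulVec]
      funext i
      induction i using Fin.cases <;> (simp; try ring)

theorem kalman_rank_of_distinct {n : ℕ} (lam a b : Fin n → ℝ)
    (hdist : Function.Injective lam)
    (hab : ∀ j : Fin n, a j + lam j * b j ≠ 0) :
    (kalmanMatrix (A1mat lam a) (B1vec b)).rank = n + 1 := by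
  set c : Fin n → ℝ := fun j => a j + lam j * b j with hc
  have hM : kalmanMatrix (A1mat lam a) (B1vec b) =
      Matrix.of (fun i k => Fin.cases
        (Fin.cases (1:ℝ) (fun _ => 0) k)
        (fun j => Fin.cases (b j) (fun k' => lam j ^ (k':ℕ) * c j) k) i) := by
    funext i k
    induction k using Fin.cases with
    | zero =>
        simp [kalmanMatrix]
        induction i using Fin.cases <;> simp [B1vec]
    | succ k' =>
        have : ((k'.succ : Fin (n+1)) : ℕ) = (k' : ℕ) + 1 := Fin.val_succ k'
        simp only [kalmanMatrix, Matrix.of_apply, this, A1_pow_mulVec]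
        induction i using Fin.cases <;> simp [hc]
  have hdet : (kalmanMatrix (A1mat lam a) (B1vec b)).det ≠ 0 := by
    rw [hM, Matrix.det_succ_row_zero, Fin.sum_univ_succ]
    simp only [Matrix.of_apply, Fin.cases_zero, Fin.cases_succ, mul_zero, zero_mul,
      mul_one, Finset.sum_const_zero, add_zero, Fin.val_zero, pow_zero, one_mul,
      Fin.succAbove_zero]
    have hsub : (Matrix.of (fun i k => Fin.cases
        (Fin.cases (1:ℝ) (fun _ => 0) k)
        (fun j => Fin.cases (b j) (fun k' => lam j ^ (k':ℕ) * c j) k) i)).submatrix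
        Fin.succ Fin.succ = Matrix.diagonal c * Matrix.vandermonde lam := by
      funext j k
      simp [Matrix.mul_apply, Matrix.diagonal, Matrix.vandermonde, Finset.sum_ite_eq,
        ite_mul, mul_comm]
    rw [hsub, Matrix.det_mul, Matrix.det_diagonal]
    exact mul_ne_zero (Finset.prod_ne_zero_iff.mpr fun j _ => hab j)
      (Matrix.det_vandermonde_ne_zero_iff.mpr hdist)
  have : IsUnit (kalmanMatrix (A1mat lam a) (B1vec b)) := by
    rw [Matrix.isUnit_iff_isUnit_det]
    exact isUnit_iff_ne_zero.mpr hdet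
  rw [Matrix.rank_of_isUnit _ this, Fintype.card_fin]
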